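/- The integer (m−2)·ĝ − Σ_{i=1}^m ĝ_i is even and is at least −2 (it equals 2g−2, where g is the genus of the central curve of the minimal good resolution of the Brieskorn complete intersection singularity with exponents a_1,…,a_m). -/

import Mathlib

open Finset

lemma my_lcm_ne_zero {ι : Type*} [DecidableEq ι] (s : Finset ι) (f : ι → ℕ)
    (hf : ∀ i ∈ s, f i ≠ 0) : s.lcm f ≠ 0 := by
  classical
  induction s using Finset.induction with
  | empty => simp
  | insert a s' hx ih =>
    rw [Finset.lcm_insert, lcm_eq_nat_lcm]
    have h1 : f a ≠ 0 := hf a (mem_insert_self a s')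
    have h2 : s'.lcm f ≠ 0 := ih fun i hi => hf i (mem_insert_of_mem hi)
    exact (Nat.lcm_pos (Nat.pos_of_ne_zero h1) (Nat.pos_of_ne_zero h2)).ne'

lemma my_lcm_factorization {ι : Type*} [DecidableEq ι] (s : Finset ι) (f : ι → ℕ)
    (hf : ∀ i ∈ s, f i ≠ 0) (p : ℕ) :
    (s.lcm f).factorization p = s.sup fun i => (f i).factorization p := by
  classical
  induction s using Finset.induction with
  | empty => simp
  | insert a s' hx ih =>
    rw [Finset.lcm_insert, Finset.sup_insert, lcm_eq_nat_lcm]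
    have h1 : f a ≠ 0 := hf a (mem_insert_self a s')
    have h2 : s'.lcm f ≠ 0 := my_lcm_ne_zero s' f fun i hi => hf i (mem_insert_of_mem hi)
    rw [Nat.factorization_lcm h1 h2, Finsupp.sup_apply, ih fun i hi => hf i (mem_insert_of_mem hi)]

lemma my_lcm_dvd_prod {ι : Type*} [DecidableEq ι] (s : Finset ι) (f : ι → ℕ) :
    s.lcm f ∣ ∏ i ∈ s, f i :=
  Finset.lcm_dvd fun _ hi => Finset.dvd_prod_of_mem f hi

-- triangle inequality helper, asymmetric version
lemma tri_aux (x y z : ℤ) (hx : 1 ≤ x) (hy : 2 ≤ y) (hyz : y ≤ z) :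
    x*y + y*z + z*x ≤ x*y*z + 2*z := by
  nlinarith [mul_nonneg (mul_nonneg (by linarith : (0:ℤ) ≤ x - 1) (by linarith : (0:ℤ) ≤ y - 2)) (by linarith : (0:ℤ) ≤ y),
    mul_nonneg (by linarith : (0:ℤ) ≤ z - y)
      (by nlinarith : (0:ℤ) ≤ (x-1)*(y-1)+1)]

lemma tri (x y z w : ℕ) (hx : 2 ≤ x) (hy : 2 ≤ y) (hz : 2 ≤ z)
    (hxw : x ≤ w) (hyw : y ≤ w) (hzw : z ≤ w) :
    x*y + y*z + z*x ≤ x*y*z + 2*w := by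
  have key : ∀ u v t : ℕ, 2 ≤ u → 2 ≤ v → 2 ≤ t → v ≤ t → t ≤ w →
      u*v + v*t + t*u ≤ u*v*t + 2*w := by
    intro u v t hu hv ht hvt htw
    have h := tri_aux (u:ℤ) (v:ℤ) (t:ℤ) (by exact_mod_cast hu.trans' (by norm_num))
      (by exact_mod_cast hv) (by exact_mod_cast hvt)
    have : (u:ℤ)*v + v*t + t*u ≤ (u:ℤ)*v*t + 2*w := by
      have hw : (t:ℤ) ≤ w := by exact_mod_cast htw
      linarith
    exact_mod_cast this
  rcases le_total x y with h1 | h1 <;> rcases le_total y z with h2 | h2 <;>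
    rcases le_total x z with h3 | h3 <;>
  [ (have H := key x y z hx hy hz (by omega) hzw);
    (have H := key x y z hx hy hz (by omega) hzw);
    (have H := key z x y hz hx hy (by omega) hyw);
    (have H := key z x y hz hx hy (by omega) hyw);
    (have H := key y x z hy hx hz (by omega) hzw);
    (have H := key y z x hy hz hx (by omega) hxw);
    (have H := key y z x hy hz hx (by omega) hxw);
    (have H := key y z x hy hz hx (by omega) hxw)] <;>
  · ring_nf at H ⊢; omega

lemma core {m : ℕ} (hm : 3 ≤ m) (n gi : Fin m → ℕ) (g : ℕ) (hg0 : g ≠ 0)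
    (hn0 : ∀ i, n i ≠ 0)
    (H2 : ∀ i, gi i * n i = g)
    (H3 : g * Finset.univ.lcm n = ∏ i, n i)
    (H4 : ∀ i, n i ∣ (Finset.univ.erase i).lcm n) :
    Even (((m:ℤ) - 2) * (g:ℤ) - ∑ i, (gi i : ℤ)) ∧
    (-2 : ℤ) ≤ ((m:ℤ) - 2) * (g:ℤ) - ∑ i, (gi i : ℤ) := by
  have hgi0 : ∀ i, gi i ≠ 0 := fun i h => hg0 (by rw [← H2 i, h, zero_mul])
  have hL0 : Finset.univ.lcm n ≠ 0 := my_lcm_ne_zero _ _ fun i _ => hn0 i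
  have hP0 : (∏ i, n i) ≠ 0 := Finset.prod_ne_zero_iff.mpr fun i _ => hn0 i
  set ε : Fin m → ℕ := fun i => (n i).factorization 2 with hεdef
  set Sε : ℕ := ∑ i, ε i with hSdef
  set E : ℕ := Finset.univ.sup ε with hEdef
  have hLfac : (Finset.univ.lcm n).factorization 2 = E := my_lcm_factorization _ _ (fun i _ => hn0 i) 2
  -- valuation identity
  have hval : ∀ i, (gi i).factorization 2 + ε i + E = Sε := by
    intro i
    have hmul : gi i * (n i * Finset.univ.lcm n) = ∏ j, n j := by rw [← mul_assoc, H2 i, H3]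
    have h := congrArg (fun t => Nat.factorization t 2) hmul
    rw [Nat.factorization_mul (hgi0 i) (mul_ne_zero (hn0 i) hL0),
      Nat.factorization_mul (hn0 i) hL0,
      Nat.factorization_prod (fun j _ => hn0 j)] at h
    simpa [Finsupp.add_apply, Finset.sum_apply', hLfac, add_assoc] using h
  have hεE : ∀ i, ε i ≤ E := fun i => Finset.le_sup (mem_univ i)
  -- even part
  haveI : Nonempty (Fin m) := ⟨⟨0, by omega⟩⟩
  have heven : Even (∑ i, (gi i : ℤ) * ((n i : ℤ) - 1)) := by
    obtain ⟨i1, -, hi1⟩ := Finset.exists_mem_eq_sup Finset.univ univ_nonempty ε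
    have hodd_of : ∀ i, ε i = 0 → Even ((gi i : ℤ) * ((n i : ℤ) - 1)) := by
      intro i hi
      have hi' : (n i).factorization 2 = 0 := hi
      have : ¬ (2 ∣ n i) := fun hdvd => by
        have := (Nat.Prime.dvd_iff_one_le_factorization Nat.prime_two (hn0 i)).mp hdvd
        omega
      have : Odd (n i) := Nat.odd_iff.mpr (by omega)
      have : Odd ((n i : ℤ)) := by exact_mod_cast this
      exact (this.sub_odd odd_one).mul_left _
    have hgieven_of : ∀ i, 1 ≤ (gi i).factorization 2 → Even ((gi i : ℤ) * ((n i : ℤ) - 1)) := by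
      intro i hi
      have : 2 ∣ gi i := (Nat.Prime.dvd_iff_one_le_factorization Nat.prime_two (hgi0 i)).mpr hi
      have : Even (gi i) := even_iff_two_dvd.mpr this
      have : Even ((gi i : ℤ)) := by exact_mod_cast this
      exact this.mul_right _
    by_cases hE : E = 0
    · exact Finset.even_sum _ fun i _ => hodd_of i (by have := hεE i; omega)
    · -- find second index attaining the max
      have hne : (univ.erase i1).Nonempty := by
        rw [← Finset.card_pos, Finset.card_erase_of_mem (mem_univ i1), Finset.card_univ,
          Fintype.card_fin]
        omega
      obtain ⟨i2, hi2mem, hi2⟩ := Finset.exists_mem_eq_sup (univ.erase i1) hne ε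
      have hεi1 : ε i1 = E := hi1.symm
      have hεi2 : ε i2 = E := by
        have h1 : ε i1 ≤ (univ.erase i1).sup ε := by
          have := (Nat.factorization_le_iff_dvd (hn0 i1)
            (my_lcm_ne_zero _ _ fun j _ => hn0 j)).mpr (H4 i1)
          have h2 := Finsupp.le_def.mp this 2
          rwa [my_lcm_factorization _ _ (fun j _ => hn0 j) 2] at h2
        have := hεE i2
        omega
      have hi2ne : i2 ≠ i1 := (Finset.mem_erase.mp hi2mem).1
      -- split the sum of ε
      have hsplit : Sε = ε i1 + ε i2 + ∑ i ∈ (univ.erase i1).erase i2, ε i := by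
        rw [hSdef, ← Finset.add_sum_erase _ ε (mem_univ i1), ← Finset.add_sum_erase _ ε hi2mem]
        ring
      by_cases hR : ∑ i ∈ (univ.erase i1).erase i2, ε i = 0
      · -- exactly two indices carry the 2-adic max; both terms odd
        have hrest0 : ∀ i ∈ (univ.erase i1).erase i2, ε i = 0 :=
          Finset.sum_eq_zero_iff.mp hR
        have hoddterm : ∀ i, ε i = E → Odd ((gi i : ℤ) * ((n i : ℤ) - 1)) := by
          intro i hi
          have hi' : (n i).factorization 2 = E := hi
          have hv : (gi i).factorization 2 = 0 := by
            have := hval i; rw [hsplit] at this; rw [hεi1, hεi2] at this; omega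
          have hgiodd : Odd (gi i) := Nat.odd_iff.mpr (by
            have : ¬ (2 ∣ gi i) := fun hdvd => by
              have := (Nat.Prime.dvd_iff_one_le_factorization Nat.prime_two (hgi0 i)).mp hdvd
              omega
            omega)
          have hgiodd' : Odd ((gi i : ℤ)) := by exact_mod_cast hgiodd
          have hnieven : Even (n i) := even_iff_two_dvd.mpr
            ((Nat.Prime.dvd_iff_one_le_factorization Nat.prime_two (hn0 i)).mpr (by omega))
          have : Even ((n i : ℤ)) := by exact_mod_cast hnieven
          exact hgiodd'.mul (this.sub_odd odd_one)
        rw [← Finset.add_sum_erase _ _ (mem_univ i1), ← Finset.add_sum_erase _ _ hi2mem,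
          ← add_assoc]
        exact ((hoddterm i1 hεi1).add_odd (hoddterm i2 hεi2)).add
          (Finset.even_sum _ fun i hi => hodd_of i (hrest0 i hi))
      · -- extra 2-adic mass: every term is even
        apply Finset.even_sum
        intro i _
        rcases Nat.eq_zero_or_pos (ε i) with h0 | h1
        · exact hodd_of i h0
        · apply hgieven_of
          have hv := hval i
          rw [hsplit, hεi1, hεi2] at hv
          have := hεE i
          omega
  -- key algebraic rewriting of the goal quantity
  have hkey : ((m:ℤ) - 2) * (g:ℤ) - ∑ i, (gi i : ℤ)
      = (∑ i, (gi i : ℤ) * ((n i : ℤ) - 1)) - 2 * g := by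
    have h1 : ∀ i ∈ Finset.univ (α := Fin m), (gi i : ℤ) * ((n i : ℤ) - 1) = (g:ℤ) - gi i := by
      intro i _
      have h := H2 i
      have h' : (gi i : ℤ) * (n i : ℤ) = (g : ℤ) := by exact_mod_cast h
      linarith [h']
    rw [Finset.sum_congr rfl h1, Finset.sum_sub_distrib, Finset.sum_const, Finset.card_univ,
      Fintype.card_fin]
    ring
  -- the natural-number inequality
  classical
  set S := Finset.univ.filter (fun i => 2 ≤ n i) with hSdef2
  have hmemS : ∀ i, i ∈ S → 2 ≤ n i := by
    intro i hi
    rw [hSdef2] at hi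
    exact (Finset.mem_filter.mp hi).2
  have hone : ∀ i, i ∉ S → n i = 1 := by
    intro i hi
    have h := hn0 i
    have : ¬ 2 ≤ n i := by
      intro h2
      exact hi (by simp [hSdef2, h2])
    omega
  have hgiS : ∀ i, i ∉ S → gi i = g := by
    intro i hi
    have h := H2 i
    rwa [hone i hi, mul_one] at h
  have honotg : ∀ i ∈ Finset.univ.filter (fun i => ¬ 2 ≤ n i), gi i = g := by
    intro i hi
    refine hgiS i fun hiS => ?_
    exact (Finset.mem_filter.mp hi).2 (hmemS i hiS)
  have honot1 : ∀ i ∈ Finset.univ.filter (fun i => ¬ 2 ≤ n i), n i = 1 := by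
    intro i hi
    refine hone i fun hiS => ?_
    exact (Finset.mem_filter.mp hi).2 (hmemS i hiS)
  have hcard : S.card + (Finset.univ.filter (fun i => ¬ 2 ≤ n i)).card = m := by
    rw [hSdef2, Finset.card_filter_add_card_filter_not, Finset.card_univ,
      Fintype.card_fin]
  have hksum : ∑ i, gi i = (∑ i ∈ S, gi i) + (m - S.card) * g := by
    rw [← Finset.sum_filter_add_sum_filter_not Finset.univ (fun i => 2 ≤ n i) gi, ← hSdef2]
    congr 1
    rw [Finset.sum_congr rfl honotg, Finset.sum_const, smul_eq_mul]
    congr 1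
    omega
  have hfin : (∑ i ∈ S, gi i) + (m - S.card) * g ≤ (m - 2) * g + 2 := by
    rcases Nat.lt_or_ge S.card 4 with h4 | h4
    · have hk0 : S.card = 0 ∨ S.card = 1 ∨ S.card = 2 ∨ S.card = 3 := by omega
      rcases hk0 with hk | hk | hk | hk
      · -- no index with n i ≥ 2 : all n i = 1, so g = 1
        have hSempty : S = ∅ := Finset.card_eq_zero.mp hk
        have hall : ∀ i, n i = 1 := fun i => hone i (by simp [hSempty])
        have hg1 : g = 1 := by
          have hp : (∏ i, n i) = 1 := Finset.prod_eq_one fun i _ => hall i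
          have := H3
          rw [hp] at this
          exact Nat.eq_one_of_mul_eq_one_right this
        rw [hSempty, Finset.sum_empty, hg1]
        simp only [Finset.card_empty, mul_one, Nat.sub_zero, zero_add]
        omega
      · -- exactly one index : impossible
        exfalso
        obtain ⟨x, hSx⟩ := Finset.card_eq_one.mp hk
        have hx2 : 2 ≤ n x := by
          have : x ∈ S := by rw [hSx]; exact Finset.mem_singleton_self x
          exact hmemS x this
        have hdvd : n x ∣ 1 := by
          refine (H4 x).trans (Finset.lcm_dvd fun j hj => ?_)
          have hjx : j ≠ x := (Finset.mem_erase.mp hj).1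
          have : j ∉ S := by rw [hSx]; simp [hjx]
          rw [hone j this]
        have := Nat.le_of_dvd one_pos hdvd
        omega
      · -- exactly two indices : they are equal, g = n x, both gi = 1
        obtain ⟨x, y, hxy, hSxy⟩ := Finset.card_eq_two.mp hk
        have hxS : x ∈ S := by rw [hSxy]; simp
        have hyS : y ∈ S := by rw [hSxy]; simp
        have hx2 : 2 ≤ n x := hmemS x hxS
        have hy2 : 2 ≤ n y := hmemS y hyS
        have hdxy : n x ∣ n y := by
          refine (H4 x).trans (Finset.lcm_dvd fun j hj => ?_)
          have hjx : j ≠ x := (Finset.mem_erase.mp hj).1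
          by_cases hjy : j = y
          · rw [hjy]
          · have : j ∉ S := by rw [hSxy]; simp [hjx, hjy]
            rw [hone j this]
            exact one_dvd _
        have hdyx : n y ∣ n x := by
          refine (H4 y).trans (Finset.lcm_dvd fun j hj => ?_)
          have hjy : j ≠ y := (Finset.mem_erase.mp hj).1
          by_cases hjx : j = x
          · rw [hjx]
          · have : j ∉ S := by rw [hSxy]; simp [hjx, hjy]
            rw [hone j this]
            exact one_dvd _
        have hnxy : n x = n y := Nat.dvd_antisymm hdxy hdyx
        have hLx : Finset.univ.lcm n = n x := by
          refine Nat.dvd_antisymm (Finset.lcm_dvd fun j _ => ?_) (Finset.dvd_lcm (mem_univ x))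
          by_cases hjx : j = x
          · rw [hjx]
          · by_cases hjy : j = y
            · rw [hjy]; exact dvd_of_eq hnxy.symm
            · have : j ∉ S := by rw [hSxy]; simp [hjx, hjy]
              rw [hone j this]
              exact one_dvd _
        have hprod : (∏ i, n i) = n x * n y := by
          rw [← Finset.prod_filter_mul_prod_filter_not Finset.univ (fun i => 2 ≤ n i) n,
            ← hSdef2, hSxy, Finset.prod_pair hxy,
            Finset.prod_eq_one honot1, mul_one]
        have hgx : g = n x := by
          have h := H3
          rw [hLx, hprod, ← hnxy] at h
          exact Nat.eq_of_mul_eq_mul_right (by omega) h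
        have hgix : gi x = 1 := by
          have h := H2 x
          rw [hgx] at h
          have : gi x * n x = 1 * n x := by omega
          exact Nat.eq_of_mul_eq_mul_right (by omega) this
        have hgiy : gi y = 1 := by
          have h := H2 y
          rw [hgx, hnxy] at h
          have : gi y * n y = 1 * n y := by omega
          exact Nat.eq_of_mul_eq_mul_right (by omega) this
        rw [hSxy, Finset.sum_pair hxy, hgix, hgiy, Finset.card_pair hxy]
        omega
      · -- exactly three indices : the triangle case
        obtain ⟨x, y, z, hxy, hxz, hyz, hSxyz⟩ := Finset.card_eq_three.mp hk
        have hxS : x ∈ S := by rw [hSxyz]; simp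
        have hyS : y ∈ S := by rw [hSxyz]; simp
        have hzS : z ∈ S := by rw [hSxyz]; simp
        have hx2 : 2 ≤ n x := hmemS x hxS
        have hy2 : 2 ≤ n y := hmemS y hyS
        have hz2 : 2 ≤ n z := hmemS z hzS
        have hLpos : 0 < Finset.univ.lcm n := Nat.pos_of_ne_zero hL0
        have hxL : n x ≤ Finset.univ.lcm n := Nat.le_of_dvd hLpos (Finset.dvd_lcm (mem_univ x))
        have hyL : n y ≤ Finset.univ.lcm n := Nat.le_of_dvd hLpos (Finset.dvd_lcm (mem_univ y))
        have hzL : n z ≤ Finset.univ.lcm n := Nat.le_of_dvd hLpos (Finset.dvd_lcm (mem_univ z))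
        have hprod : (∏ i, n i) = n x * (n y * n z) := by
          rw [← Finset.prod_filter_mul_prod_filter_not Finset.univ (fun i => 2 ≤ n i) n,
            ← hSdef2, hSxyz,
            Finset.prod_eq_one honot1, mul_one,
            Finset.prod_insert (by simp [hxy, hxz]), Finset.prod_insert (by simp [hyz]),
            Finset.prod_singleton]
        have H3' : g * Finset.univ.lcm n = n x * (n y * n z) := by rw [H3, hprod]
        have hgx : gi x * Finset.univ.lcm n = n y * n z := by
          refine Nat.eq_of_mul_eq_mul_right (show 0 < n x by omega) ?_
          calc gi x * Finset.univ.lcm n * n x = gi x * n x * Finset.univ.lcm n := by ring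
          _ = g * Finset.univ.lcm n := by rw [H2 x]
          _ = n x * (n y * n z) := H3'
          _ = n y * n z * n x := by ring
        have hgy : gi y * Finset.univ.lcm n = n x * n z := by
          refine Nat.eq_of_mul_eq_mul_right (show 0 < n y by omega) ?_
          calc gi y * Finset.univ.lcm n * n y = gi y * n y * Finset.univ.lcm n := by ring
          _ = g * Finset.univ.lcm n := by rw [H2 y]
          _ = n x * (n y * n z) := H3'
          _ = n x * n z * n y := by ring
        have hgz : gi z * Finset.univ.lcm n = n x * n y := by
          refine Nat.eq_of_mul_eq_mul_right (show 0 < n z by omega) ?_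
          calc gi z * Finset.univ.lcm n * n z = gi z * n z * Finset.univ.lcm n := by ring
          _ = g * Finset.univ.lcm n := by rw [H2 z]
          _ = n x * (n y * n z) := H3'
          _ = n x * n y * n z := by ring
        have htri := tri (n x) (n y) (n z) (Finset.univ.lcm n) hx2 hy2 hz2 hxL hyL hzL
        have hle : gi x + gi y + gi z ≤ g + 2 := by
          refine Nat.le_of_mul_le_mul_right ?_ hLpos
          calc (gi x + gi y + gi z) * Finset.univ.lcm n
              = n y * n z + n x * n z + n x * n y := by rw [add_mul, add_mul, hgx, hgy, hgz]
            _ = n x * n y + n y * n z + n z * n x := by ring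
            _ ≤ n x * n y * n z + 2 * Finset.univ.lcm n := htri
            _ = n x * (n y * n z) + 2 * Finset.univ.lcm n := by ring
            _ = g * Finset.univ.lcm n + 2 * Finset.univ.lcm n := by rw [H3']
            _ = (g + 2) * Finset.univ.lcm n := by ring
        have hsumS : (∑ i ∈ S, gi i) = gi x + gi y + gi z := by
          rw [hSxyz, Finset.sum_insert (by simp [hxy, hxz]),
            Finset.sum_insert (by simp [hyz]), Finset.sum_singleton]
          ring
        have h9 : (m - 3) * g + g = (m - 2) * g := by
          have h10 : m - 2 = (m - 3) + 1 := by omega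
          rw [h10, Nat.succ_mul]
        rw [hsumS, hk]
        omega
    · -- at least four indices : the generic bound
      have h2g : ∀ i ∈ S, 2 * gi i ≤ g := by
        intro i hi
        have h2n : 2 ≤ n i := hmemS i hi
        calc 2 * gi i = gi i * 2 := mul_comm _ _
        _ ≤ gi i * n i := Nat.mul_le_mul_left _ h2n
        _ = g := H2 i
      have hS2 : 2 * ∑ i ∈ S, gi i ≤ S.card * g := by
        rw [Finset.mul_sum]
        calc ∑ i ∈ S, 2 * gi i ≤ ∑ _i ∈ S, g := Finset.sum_le_sum h2g
        _ = S.card * g := by rw [Finset.sum_const, smul_eq_mul]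
      have hSle : (∑ i ∈ S, gi i) ≤ (S.card - 2) * g := by
        have hcoef : S.card ≤ 2 * (S.card - 2) := by omega
        have h1 : 2 * ∑ i ∈ S, gi i ≤ 2 * ((S.card - 2) * g) :=
          hS2.trans (by rw [show 2 * ((S.card - 2) * g) = (2 * (S.card - 2)) * g by ring]
                        exact Nat.mul_le_mul_right g hcoef)
        omega
      have hsplitcoef : (S.card - 2) * g + (m - S.card) * g = (m - 2) * g := by
        rw [← add_mul]
        congr 1
        have hm' : S.card ≤ m := by omega
        omega
      omega
  have hineq : ∑ i, gi i ≤ (m - 2) * g + 2 := by rw [hksum]; exact hfin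
  constructor
  · rw [hkey]
    exact heven.sub ⟨(g:ℤ), by ring⟩
  · have hc := (Nat.cast_le (α := ℤ)).mpr hineq
    push_cast [Nat.cast_sub (show 2 ≤ m by omega)] at hc
    linarith



/-- The integer `(m-2)·ĝ − Σ_i ĝ i` is even and at least `−2`
(it equals `2g − 2` where `g` is the genus of the central curve). -/
theorem brieskorn_central_genus
    (m : ℕ) (hm : 3 ≤ m) (a : Fin m → ℕ)
    (ha : ∀ i, 2 ≤ a i) (hmono : Monotone a)
    (ℓ : ℕ) (hℓ : ℓ = Finset.univ.lcm a)
    (ℓi : Fin m → ℕ) (hℓi : ∀ i, ℓi i = (Finset.univ.erase i).lcm a)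
    (α : Fin m → ℕ) (hα : ∀ i, α i = ℓ / ℓi i)
    (g : ℕ) (hg : g = (∏ i, a i) / ℓ)
    (gi : Fin m → ℕ) (hgi : ∀ i, gi i = g * α i / a i) :
    Even (((m : ℤ) - 2) * (g : ℤ) - ∑ i, (gi i : ℤ)) ∧
    (-2 : ℤ) ≤ ((m : ℤ) - 2) * (g : ℤ) - ∑ i, (gi i : ℤ) := by
  classical
  have ha0 : ∀ i, a i ≠ 0 := fun i => by have := ha i; omega
  have hℓ0 : ℓ ≠ 0 := by rw [hℓ]; exact my_lcm_ne_zero _ _ fun i _ => ha0 i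
  have hℓi0 : ∀ i, ℓi i ≠ 0 := fun i => by
    rw [hℓi]; exact my_lcm_ne_zero _ _ fun j _ => ha0 j
  have hdvdℓ : ∀ i, ℓi i ∣ ℓ := fun i => by
    rw [hℓi, hℓ]; exact Finset.lcm_dvd fun j _ => Finset.dvd_lcm (Finset.mem_univ j)
  have hαℓ : ∀ i, α i * ℓi i = ℓ := fun i => by
    rw [hα]; exact Nat.div_mul_cancel (hdvdℓ i)
  have hα0 : ∀ i, α i ≠ 0 := fun i h => hℓ0 (by rw [← hαℓ i, h, zero_mul])
  have hℓd : ∀ i, ℓ ∣ ℓi i * a i := by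
    intro i
    rw [hℓ]
    refine Finset.lcm_dvd fun j _ => ?_
    by_cases hj : j = i
    · rw [hj]; exact dvd_mul_left _ _
    · have hji : a j ∣ ℓi i := by
        rw [hℓi]; exact Finset.dvd_lcm (Finset.mem_erase.mpr ⟨hj, Finset.mem_univ j⟩)
      exact hji.trans (dvd_mul_right _ _)
  have hαa : ∀ i, α i ∣ a i := by
    intro i
    have h := hℓd i
    rw [← hαℓ i, mul_comm (α i) (ℓi i)] at h
    exact (mul_dvd_mul_iff_left (hℓi0 i)).mp h
  set n : Fin m → ℕ := fun i => a i / α i with hndef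
  have hna : ∀ i, n i * α i = a i := fun i => Nat.div_mul_cancel (hαa i)
  have hn0 : ∀ i, n i ≠ 0 := fun i h => ha0 i (by rw [← hna i, h, zero_mul])
  have hℓprod : ℓ ∣ ∏ i, a i := by rw [hℓ]; exact my_lcm_dvd_prod _ _
  have hgℓ : g * ℓ = ∏ i, a i := by rw [hg]; exact Nat.div_mul_cancel hℓprod
  have hg0 : g ≠ 0 := fun h =>
    (Finset.prod_ne_zero_iff.mpr fun i _ => ha0 i) (by rw [← hgℓ, h, zero_mul])
  have hℓiprod : ∀ i, ℓi i ∣ ∏ j ∈ Finset.univ.erase i, a j := fun i => by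
    rw [hℓi]; exact my_lcm_dvd_prod _ _
  have hsplit : ∀ i, (∏ j, a j) = a i * ∏ j ∈ Finset.univ.erase i, a j := fun i =>
    (Finset.mul_prod_erase Finset.univ a (Finset.mem_univ i)).symm
  have haig : ∀ i, a i ∣ g * α i := by
    intro i
    have h1 : (g * α i) * ℓi i = ∏ j, a j := by
      calc (g * α i) * ℓi i = g * (α i * ℓi i) := by ring
      _ = g * ℓ := by rw [hαℓ i]
      _ = ∏ j, a j := hgℓ
    have h2 : a i * ℓi i ∣ ∏ j, a j := by
      rw [hsplit i]
      exact mul_dvd_mul_left (a i) (hℓiprod i)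
    rw [← h1] at h2
    exact (mul_dvd_mul_iff_right (hℓi0 i)).mp h2
  have hgia : ∀ i, gi i * a i = g * α i := fun i => by
    rw [hgi]; exact Nat.div_mul_cancel (haig i)
  have H2 : ∀ i, gi i * n i = g := by
    intro i
    have h : gi i * n i * α i = g * α i := by
      calc gi i * n i * α i = gi i * (n i * α i) := by ring
      _ = gi i * a i := by rw [hna i]
      _ = g * α i := hgia i
    exact Nat.eq_of_mul_eq_mul_right (Nat.pos_of_ne_zero (hα0 i)) h
  -- per-prime valuation facts
  have hwℓ : ∀ p, ℓ.factorization p = Finset.univ.sup fun j => (a j).factorization p := by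
    intro p
    rw [hℓ]
    exact my_lcm_factorization _ _ (fun j _ => ha0 j) p
  have hwℓi : ∀ k p, (ℓi k).factorization p
      = (Finset.univ.erase k).sup fun j => (a j).factorization p := by
    intro k p
    rw [hℓi]
    exact my_lcm_factorization _ _ (fun j _ => ha0 j) p
  have hA : ∀ k p, (α k).factorization p + (ℓi k).factorization p = ℓ.factorization p := by
    intro k p
    have h := congrArg (fun t => Nat.factorization t p) (hαℓ k)
    rwa [Nat.factorization_mul (hα0 k) (hℓi0 k), Finsupp.add_apply] at h
  have hN : ∀ k p, (n k).factorization p + (α k).factorization p = (a k).factorization p := by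
    intro k p
    have h := congrArg (fun t => Nat.factorization t p) (hna k)
    rwa [Nat.factorization_mul (hn0 k) (hα0 k), Finsupp.add_apply] at h
  have hWmax : ∀ k p, ℓ.factorization p
      = max ((a k).factorization p) ((ℓi k).factorization p) := by
    intro k p
    rw [hwℓ p, hwℓi k p]
    conv_lhs => rw [← Finset.insert_erase (Finset.mem_univ k)]
    rw [Finset.sup_insert]
  have herasene : ∀ k : Fin m, (Finset.univ.erase k).Nonempty := by
    intro k
    rw [← Finset.card_pos, Finset.card_erase_of_mem (Finset.mem_univ k), Finset.card_univ,
      Fintype.card_fin]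
    omega
  have H4 : ∀ i, n i ∣ (Finset.univ.erase i).lcm n := by
    intro i
    have hlcm0 : (Finset.univ.erase i).lcm n ≠ 0 := my_lcm_ne_zero _ _ fun j _ => hn0 j
    rw [← Nat.factorization_le_iff_dvd (hn0 i) hlcm0]
    rw [Finsupp.le_def]
    intro p
    rw [my_lcm_factorization _ _ (fun j _ => hn0 j) p]
    obtain ⟨j0, hj0mem, hj0⟩ := Finset.exists_mem_eq_sup (Finset.univ.erase i) (herasene i)
      (fun j => (a j).factorization p)
    refine le_trans (?_ : (n i).factorization p ≤ (n j0).factorization p)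
      (Finset.le_sup (f := fun j => (n j).factorization p) hj0mem)
    -- pure arithmetic with valuations
    have e1 := hN i p
    have e2 := hA i p
    have e3 := hN j0 p
    have e4 := hA j0 p
    have e5 : (ℓi i).factorization p = (a j0).factorization p := by rw [hwℓi i p, hj0]
    have e6 : (a i).factorization p ≤ (ℓi j0).factorization p := by
      rw [hwℓi j0 p]
      exact Finset.le_sup (f := fun j => (a j).factorization p)
        (Finset.mem_erase.mpr ⟨Ne.symm (Finset.mem_erase.mp hj0mem).1, Finset.mem_univ i⟩)
    have e7a : (a i).factorization p ≤ ℓ.factorization p := by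
      rw [hWmax i p]; exact le_max_left _ _
    have e7b : (ℓi i).factorization p ≤ ℓ.factorization p := by
      rw [hWmax i p]; exact le_max_right _ _
    have e7c : ℓ.factorization p = (a i).factorization p ∨
        ℓ.factorization p = (ℓi i).factorization p := by
      rw [hWmax i p]; exact max_choice _ _
    have e8a : (a j0).factorization p ≤ ℓ.factorization p := by
      rw [hWmax j0 p]; exact le_max_left _ _
    have e8b : (ℓi j0).factorization p ≤ ℓ.factorization p := by
      rw [hWmax j0 p]; exact le_max_right _ _
    have e8c : ℓ.factorization p = (a j0).factorization p ∨
        ℓ.factorization p = (ℓi j0).factorization p := by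
      rw [hWmax j0 p]; exact max_choice _ _
    show (n i).factorization p ≤ (n j0).factorization p
    omega
  haveI : Nonempty (Fin m) := ⟨⟨0, by omega⟩⟩
  have H3 : g * Finset.univ.lcm n = ∏ i, n i := by
    have hL0 : Finset.univ.lcm n ≠ 0 := my_lcm_ne_zero _ _ fun j _ => hn0 j
    have hPn0 : (∏ i, n i) ≠ 0 := Finset.prod_ne_zero_iff.mpr fun i _ => hn0 i
    have hPa0 : (∏ i, a i) ≠ 0 := Finset.prod_ne_zero_iff.mpr fun i _ => ha0 i
    have hE : (∏ i, n i) * ℓ = (∏ i, a i) * Finset.univ.lcm n := by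
      refine Nat.factorization_inj (Set.mem_setOf.mpr (mul_ne_zero hPn0 hℓ0))
        (Set.mem_setOf.mpr (mul_ne_zero hPa0 hL0)) ?_
      ext p
      rw [Nat.factorization_mul hPn0 hℓ0, Nat.factorization_mul hPa0 hL0,
        Finsupp.add_apply, Finsupp.add_apply,
        Nat.factorization_prod (fun j _ => hn0 j), Nat.factorization_prod (fun j _ => ha0 j),
        Finset.sum_apply', Finset.sum_apply',
        my_lcm_factorization _ _ (fun j _ => hn0 j) p, hwℓ p]
      -- pick an index attaining the max of the a-valuations
      obtain ⟨i0, -, hi0⟩ := Finset.exists_mem_eq_sup Finset.univ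
        (Finset.univ_nonempty (α := Fin m)) (fun j => (a j).factorization p)
      -- for all other indices the α-valuation vanishes
      have hother : ∀ j, j ≠ i0 → (n j).factorization p = (a j).factorization p := by
        intro j hj
        have h1 : (a i0).factorization p ≤ (ℓi j).factorization p := by
          rw [hwℓi j p]
          exact Finset.le_sup (f := fun j => (a j).factorization p)
            (Finset.mem_erase.mpr ⟨fun h => (hj h.symm).elim, Finset.mem_univ i0⟩)
        have h2 := hA j p
        have h3 := hN j p
        have h4 : (ℓi j).factorization p ≤ ℓ.factorization p := by
          rw [hwℓ p, hwℓi j p]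
          exact Finset.sup_mono (Finset.erase_subset j Finset.univ)
        have h5 : ℓ.factorization p = (a i0).factorization p := by rw [hwℓ p, hi0]
        omega
      have hni0 : (n i0).factorization p = (ℓi i0).factorization p := by
        have h1 := hN i0 p
        have h2 := hA i0 p
        have h5 : ℓ.factorization p = (a i0).factorization p := by rw [hwℓ p, hi0]
        omega
      -- the sup of the n-valuations equals the n-valuation at i0
      have hsupn : (Finset.univ.sup fun j => (n j).factorization p)
          = (n i0).factorization p := by
        refine le_antisymm (Finset.sup_le fun j _ => ?_)
          (Finset.le_sup (f := fun j => (n j).factorization p) (Finset.mem_univ i0))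
        by_cases hj : j = i0
        · rw [hj]
        · rw [hother j hj, hni0]
          rw [hwℓi i0 p]
          exact Finset.le_sup (f := fun j => (a j).factorization p)
            (Finset.mem_erase.mpr ⟨hj, Finset.mem_univ j⟩)
      -- split both sums at i0
      rw [← Finset.add_sum_erase _ (fun j => (n j).factorization p) (Finset.mem_univ i0),
        ← Finset.add_sum_erase _ (fun j => (a j).factorization p) (Finset.mem_univ i0),
        Finset.sum_congr rfl (fun j hj => hother j (Finset.mem_erase.mp hj).1),
        hsupn]
      have h5 : ℓ.factorization p = (a i0).factorization p := by rw [hwℓ p, hi0]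
      omega
    have h6 : (g * Finset.univ.lcm n) * ℓ = (∏ i, n i) * ℓ := by
      calc (g * Finset.univ.lcm n) * ℓ = (g * ℓ) * Finset.univ.lcm n := by ring
      _ = (∏ i, a i) * Finset.univ.lcm n := by rw [hgℓ]
      _ = (∏ i, n i) * ℓ := hE.symm
    exact Nat.eq_of_mul_eq_mul_right (Nat.pos_of_ne_zero hℓ0) h6
  exact core hm n gi g hg0 hn0 H2 H3 H4
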